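/- Let G be a finite group, X a finite G-set, H a subgroup of G, A a finite set with |A| ≥ 2, and a ∈ A. For each i ≥ 1, let O_i be the number of H-orbits of X of cardinality i. Equip A^X with the G-action (g•f)(x) = f(g⁻¹•x). Then the following polynomial identity holds in ℤ[t]: Σ_{n≥0} #{f ∈ A^X : f is H-fixed and |{x ∈ X : f(x) ≠ a}| = n}·tⁿ = Π_{i≥1} (1 + (|A|−1)·t^i)^{O_i}, the product taken over the i with O_i ≠ 0. -/

import Mathlib

/-- For a finite `G`-set `S`, a subgroup `H`, a finite color set
`A` with `|A| ≥ 2` and `a ∈ A`, the polynomial counting `H`-fixed colorings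
`f : S → A` by the number `n` of points colored differently from `a` equals
`∏_{i ≥ 1} (1 + (|A| - 1) t^i)^(O i)`, where `O i` is the number of `H`-orbits
of `S` of cardinality `i`. -/
theorem fixed_colorings_weight_polynomial {G S A : Type*} [Group G] [Fintype G]
    [Fintype S] [MulAction G S] [Fintype A] (hA : 2 ≤ Fintype.card A) (a : A)
    (H : Subgroup G) (O : ℕ → ℕ)
    (hO : ∀ i, O i =
      Nat.card {ω : MulAction.orbitRel.Quotient H S // Nat.card ω.orbit = i}) :
    (∑ n ∈ Finset.range (Fintype.card S + 1),
        (Nat.card {f : S → A // (∀ h ∈ H, ∀ x : S, f (h⁻¹ • x) = f x) ∧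
            Nat.card {x : S // f x ≠ a} = n} : ℤ) •
          (Polynomial.X : Polynomial ℤ) ^ n) =
      ∏ i ∈ Finset.Icc 1 (Fintype.card S),
        (1 + Polynomial.C ((Fintype.card A : ℤ) - 1) *
          (Polynomial.X : Polynomial ℤ) ^ i) ^ (O i) := by
  classical
  set Q := MulAction.orbitRel.Quotient H S with hQdef
  set nn : Q → ℕ := fun ω => Nat.card ω.orbit with hnn
  set P : (S → A) → Prop := fun f => ∀ h ∈ H, ∀ x : S, f (h⁻¹ • x) = f x with hP
  set w : (S → A) → ℕ := fun f => (Finset.univ.filter fun x => f x ≠ a).card with hw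
  -- basic facts about the quotient map
  have hmk : ∀ (h : G), h ∈ H → ∀ x : S,
      (Quotient.mk'' (h⁻¹ • x) : Q) = Quotient.mk'' x := by
    intro h hh x
    exact Quotient.sound' ⟨⟨h⁻¹, inv_mem hh⟩, rfl⟩
  have hPmk : ∀ g : Q → A, P (fun x => g (Quotient.mk'' x)) := by
    intro g h hh x
    simp only [hmk h hh x]
  have hPconst : ∀ f : S → A, P f → ∀ x y : S,
      (Quotient.mk'' x : Q) = Quotient.mk'' y → f x = f y := by
    intro f hf x y hxy
    rw [Quotient.eq''] at hxy
    obtain ⟨h, rfl⟩ := hxy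
    have := hf (h : G)⁻¹ (inv_mem h.2) y
    simpa [Subgroup.smul_def] using this
  -- orbit membership and cardinalities
  have hmem : ∀ (ω : Q) (x : S), x ∈ ω.orbit ↔ (Quotient.mk'' x : Q) = ω := by
    intro ω x; exact MulAction.orbitRel.Quotient.mem_orbit
  have hcard : ∀ ω : Q, nn ω = (Finset.univ.filter fun x : S => (Quotient.mk'' x : Q) = ω).card := by
    intro ω
    show Nat.card ω.orbit = _
    rw [Nat.card_eq_fintype_card]
    rw [show (Fintype.card ω.orbit) = Fintype.card {x : S // x ∈ ω.orbit} from rfl]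
    rw [Fintype.card_subtype]
    congr 1
    ext x
    simp [hmem]
  have hnn_pos : ∀ ω : Q, 1 ≤ nn ω := by
    intro ω
    have : (ω.orbit).Nonempty := ⟨Quotient.out ω, (hmem ω _).2 (Quotient.out_eq' ω)⟩
    have := this.to_subtype
    exact Nat.one_le_iff_ne_zero.2 (Nat.card_ne_zero.2 ⟨this, Set.toFinite _⟩)
  have hnn_le : ∀ ω : Q, nn ω ≤ Fintype.card S := by
    intro ω
    rw [hcard ω]
    exact (Finset.card_filter_le _ _).trans_eq (by simp)
  -- weight of a pulled-back coloring
  have hwgt : ∀ g : Q → A, w (fun x => g (Quotient.mk'' x)) =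
      ∑ ω : Q, (if g ω = a then 0 else nn ω) := by
    intro g
    show (Finset.univ.filter fun x : S => g (Quotient.mk'' x) ≠ a).card = _
    rw [Finset.card_eq_sum_card_fiberwise
      (f := fun x : S => (Quotient.mk'' x : Q)) (t := Finset.univ) (fun x _ => Finset.mem_univ _)]
    refine Finset.sum_congr rfl fun ω _ => ?_
    by_cases hga : g ω = a
    · rw [if_pos hga]
      rw [Finset.card_eq_zero]
      ext x
      simp only [Finset.mem_filter, Finset.notMem_empty, iff_false, not_and, Finset.mem_univ,
        true_and, and_imp]
      intro hne hx
      exact absurd (hx ▸ hga) hne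
    · rw [if_neg hga, hcard ω]
      congr 1
      ext x
      simp only [Finset.mem_filter, Finset.mem_univ, true_and]
      constructor
      · rintro ⟨-, h⟩; exact h
      · intro h; exact ⟨h ▸ hga, h⟩
  have hwf : ∀ f : S → A, Nat.card {x : S // f x ≠ a} = w f := by
    intro f
    rw [hw, Nat.card_eq_fintype_card, Fintype.card_subtype]
  have hNat : ∀ n : ℕ, Nat.card {f : S → A // (∀ h ∈ H, ∀ x : S, f (h⁻¹ • x) = f x) ∧
      Nat.card {x : S // f x ≠ a} = n} =
      ((Finset.univ.filter P).filter fun f => w f = n).card := by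
    intro n
    rw [Nat.card_eq_fintype_card, Fintype.card_subtype, Finset.filter_filter]
    refine congrArg Finset.card (Finset.filter_congr fun f _ => ?_)
    rw [hwf f, hP]
  have hwle : ∀ f : S → A, w f ≤ Fintype.card S := by
    intro f
    rw [hw]
    exact (Finset.card_filter_le _ _).trans_eq (by simp)
  have step1 : (∑ n ∈ Finset.range (Fintype.card S + 1),
        (Nat.card {f : S → A // (∀ h ∈ H, ∀ x : S, f (h⁻¹ • x) = f x) ∧
            Nat.card {x : S // f x ≠ a} = n} : ℤ) •
          (Polynomial.X : Polynomial ℤ) ^ n) =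
      ∑ f ∈ Finset.univ.filter P, (Polynomial.X : Polynomial ℤ) ^ (w f) := by
    rw [← Finset.sum_fiberwise_of_maps_to (g := w)
      (t := Finset.range (Fintype.card S + 1))
      (fun f _ => Finset.mem_range.2 (Nat.lt_succ_of_le (hwle f)))]
    refine Finset.sum_congr rfl fun n _ => ?_
    rw [Finset.sum_congr rfl
      (fun f hf => by rw [(Finset.mem_filter.1 hf).2] :
        ∀ f ∈ (Finset.univ.filter P).filter fun f => w f = n,
          (Polynomial.X : Polynomial ℤ) ^ (w f) = (Polynomial.X : Polynomial ℤ) ^ n),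
      Finset.sum_const, hNat n]
    rw [nsmul_eq_mul, zsmul_eq_mul]
    push_cast
    ring
  have step2 : (∑ f ∈ Finset.univ.filter P, (Polynomial.X : Polynomial ℤ) ^ (w f)) =
      ∑ g : Q → A, (Polynomial.X : Polynomial ℤ) ^ (∑ ω : Q, if g ω = a then 0 else nn ω) := by
    have hleft : ∀ f ∈ Finset.univ.filter P,
        (fun x => f (Quotient.out (Quotient.mk'' x : Q))) = f := by
      intro f hf
      funext x
      exact hPconst f ((Finset.mem_filter.1 hf).2) _ x (Quotient.out_eq' _)
    refine Finset.sum_nbij' (i := fun f (ω : Q) => f (Quotient.out ω))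
      (j := fun g x => g (Quotient.mk'' x)) (fun f _ => Finset.mem_univ _)
      (fun g _ => Finset.mem_filter.2 ⟨Finset.mem_univ _, hPmk g⟩) ?_ ?_ ?_
    · intro f hf
      exact hleft f hf
    · intro g _
      funext ω
      exact congrArg g (Quotient.out_eq' ω)
    · intro f hf
      congr 1
      rw [← hwgt (fun ω : Q => f (Quotient.out ω))]
      congr 1
      exact (hleft f hf).symm
  have step3 : (∑ g : Q → A,
        (Polynomial.X : Polynomial ℤ) ^ (∑ ω : Q, if g ω = a then 0 else nn ω)) =
      ∏ ω : Q, ∑ c : A, (Polynomial.X : Polynomial ℤ) ^ (if c = a then 0 else nn ω) := by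
    rw [Fintype.prod_sum (f := fun (ω : Q) (c : A) =>
      (Polynomial.X : Polynomial ℤ) ^ (if c = a then 0 else nn ω))]
    refine Finset.sum_congr rfl fun g _ => ?_
    rw [← Finset.prod_pow_eq_pow_sum]
  have step4 : ∀ ω : Q, (∑ c : A, (Polynomial.X : Polynomial ℤ) ^ (if c = a then 0 else nn ω)) =
      1 + Polynomial.C ((Fintype.card A : ℤ) - 1) * (Polynomial.X : Polynomial ℤ) ^ (nn ω) := by
    intro ω
    rw [← Finset.add_sum_erase _ _ (Finset.mem_univ a), if_pos rfl, pow_zero]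
    congr 1
    rw [Finset.sum_congr rfl
      (fun c hc => by rw [if_neg (Finset.ne_of_mem_erase hc)]),
      Finset.sum_const, Finset.card_erase_of_mem (Finset.mem_univ a), Finset.card_univ,
      nsmul_eq_mul]
    congr 1
    rw [← Polynomial.C_eq_natCast]
    congr 1
    have : 1 ≤ Fintype.card A := by omega
    push_cast [this]
    ring
  have step5 : (∏ ω : Q,
        (1 + Polynomial.C ((Fintype.card A : ℤ) - 1) * (Polynomial.X : Polynomial ℤ) ^ (nn ω))) =
      ∏ i ∈ Finset.Icc 1 (Fintype.card S),
        (1 + Polynomial.C ((Fintype.card A : ℤ) - 1) * (Polynomial.X : Polynomial ℤ) ^ i) ^ (O i) := by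
    rw [← Finset.prod_fiberwise_of_maps_to (g := nn) (t := Finset.Icc 1 (Fintype.card S))
      (fun ω _ => Finset.mem_Icc.2 ⟨hnn_pos ω, hnn_le ω⟩)]
    refine Finset.prod_congr rfl fun i _ => ?_
    rw [Finset.prod_congr rfl
      (fun ω hω => by rw [(Finset.mem_filter.1 hω).2] :
        ∀ ω ∈ Finset.univ.filter fun ω : Q => nn ω = i,
          (1 + Polynomial.C ((Fintype.card A : ℤ) - 1) * (Polynomial.X : Polynomial ℤ) ^ (nn ω)) =
          (1 + Polynomial.C ((Fintype.card A : ℤ) - 1) * (Polynomial.X : Polynomial ℤ) ^ i)),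
      Finset.prod_const]
    congr 1
    rw [hO i, Nat.card_eq_fintype_card, Fintype.card_subtype]
  rw [step1, step2, step3, Finset.prod_congr rfl fun ω _ => step4 ω, step5]
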